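/- In the ordered field ℝ(X) of rational functions ordered by sign of leading-coefficient quotient, the submonoid P' = ⟨X³⟩ + ⟨X + nX² : n ∈ ℕ⟩ of the monoid P = ⟨Xⁿ : n ∈ ℕ⟩ has set of atoms {X³} ∪ {X + nX² : n ∈ ℕ}, and P' cannot be generated by any increasing sequence. -/

import Mathlib

open scoped Polynomial

/-- In the ordered field `ℝ(X)` (ordered by the sign of the quotient of leading coefficients),
a rational function is positive iff the leading coefficient of its numerator is positive
(recall that `RatFunc.denom` is monic). -/
noncomputable def RatFuncPos (f : RatFunc ℝ) : Prop :=
  0 < f.num.leadingCoeff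

/-- The order relation `f ≤ g` on `ℝ(X)` induced by `RatFuncPos`. -/
noncomputable def RatFuncLe (f g : RatFunc ℝ) : Prop :=
  f = g ∨ RatFuncPos (g - f)

/-- `a` is an atom of the additive submonoid `P`. -/
def IsAtomOf (P : AddSubmonoid (RatFunc ℝ)) (a : RatFunc ℝ) : Prop :=
  a ∈ P ∧ a ≠ 0 ∧ ∀ x ∈ P, ∀ y ∈ P, a = x + y → x = 0 ∨ y = 0

/-! ### Auxiliary definitions and lemmas -/

/-- The element `c X³ + k X + m X²` of `ℝ(X)`. -/
noncomputable def tr (c k m : ℕ) : RatFunc ℝ :=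
  (c : RatFunc ℝ) * RatFunc.X ^ 3 + (k : RatFunc ℝ) * RatFunc.X +
    (m : RatFunc ℝ) * RatFunc.X ^ 2

/-- The polynomial `c X³ + k X + m X²`. -/
noncomputable def trP (c k m : ℕ) : ℝ[X] :=
  (c : ℝ[X]) * Polynomial.X ^ 3 + (k : ℝ[X]) * Polynomial.X +
    (m : ℝ[X]) * Polynomial.X ^ 2

lemma tr_eq_algebraMap (c k m : ℕ) :
    tr c k m = algebraMap ℝ[X] (RatFunc ℝ) (trP c k m) := by
  simp [tr, trP, map_add, map_mul, map_pow, RatFunc.algebraMap_X]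

lemma trP_coeff (c k m : ℕ) :
    (trP c k m).coeff 3 = c ∧ (trP c k m).coeff 1 = k ∧ (trP c k m).coeff 2 = m := by
  simp only [trP, ← Polynomial.C_eq_natCast]
  refine ⟨?_, ?_, ?_⟩ <;>
    simp [Polynomial.coeff_add, Polynomial.coeff_C_mul, Polynomial.coeff_X_pow,
      Polynomial.coeff_X]

lemma tr_injective {c k m c' k' m' : ℕ} (h : tr c k m = tr c' k' m') :
    c = c' ∧ k = k' ∧ m = m' := by
  rw [tr_eq_algebraMap, tr_eq_algebraMap] at h
  have h2 : trP c k m = trP c' k' m' := RatFunc.algebraMap_injective ℝ h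
  obtain ⟨a1, a2, a3⟩ := trP_coeff c k m
  obtain ⟨b1, b2, b3⟩ := trP_coeff c' k' m'
  refine ⟨?_, ?_, ?_⟩
  · exact_mod_cast a1 ▸ b1 ▸ congrArg (fun p => Polynomial.coeff p 3) h2
  · exact_mod_cast a2 ▸ b2 ▸ congrArg (fun p => Polynomial.coeff p 1) h2
  · exact_mod_cast a3 ▸ b3 ▸ congrArg (fun p => Polynomial.coeff p 2) h2

lemma tr_add (c k m c' k' m' : ℕ) :
    tr c k m + tr c' k' m' = tr (c + c') (k + k') (m + m') := by
  simp only [tr]; push_cast; ring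

lemma tr_smul (n c k m : ℕ) : n • tr c k m = tr (n * c) (n * k) (n * m) := by
  simp only [tr, nsmul_eq_mul]; push_cast; ring

lemma tr_zero : tr 0 0 0 = 0 := by simp [tr]

lemma X3_eq : RatFunc.X ^ 3 = tr 1 0 0 := by simp [tr]

lemma gen_eq (n : ℕ) : RatFunc.X + (n : RatFunc ℝ) * RatFunc.X ^ 2 = tr 0 1 n := by
  simp [tr]

/-- The generating set of `P'`. -/
noncomputable def genSet : Set (RatFunc ℝ) :=
  {RatFunc.X ^ 3} ∪
    {f : RatFunc ℝ | ∃ n : ℕ, 0 < n ∧ f = RatFunc.X + (n : RatFunc ℝ) * RatFunc.X ^ 2}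

lemma mem_closure_genSet {c k m : ℕ} (h1 : k ≤ m) (h2 : k = 0 → m = 0) :
    tr c k m ∈ AddSubmonoid.closure genSet := by
  have hX3 : RatFunc.X ^ 3 ∈ AddSubmonoid.closure genSet :=
    AddSubmonoid.subset_closure (Or.inl rfl)
  have hgen : ∀ n : ℕ, 0 < n → tr 0 1 n ∈ AddSubmonoid.closure genSet := by
    intro n hn
    exact AddSubmonoid.subset_closure (Or.inr ⟨n, hn, (gen_eq n).symm⟩)
  have hc : tr c 0 0 ∈ AddSubmonoid.closure genSet := by
    have : tr c 0 0 = c • tr 1 0 0 := by rw [tr_smul]; norm_num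
    rw [this, ← X3_eq]
    exact nsmul_mem hX3 c
  rcases Nat.eq_zero_or_pos k with hk | hk
  · have hm : m = 0 := h2 hk
    subst hk; subst hm; exact hc
  · have hrest : tr 0 k m ∈ AddSubmonoid.closure genSet := by
      have key : tr 0 k m = (k - 1) • tr 0 1 1 + tr 0 1 (m - k + 1) := by
        rw [tr_smul, tr_add]
        congr 1 <;> omega
      rw [key]
      exact AddSubmonoid.add_mem _ (nsmul_mem (hgen 1 one_pos) _)
        (hgen (m - k + 1) (by omega))
    have : tr c k m = tr c 0 0 + tr 0 k m := by rw [tr_add]; norm_num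
    rw [this]
    exact AddSubmonoid.add_mem _ hc hrest

lemma mem_closure_genSet_iff {f : RatFunc ℝ} :
    f ∈ AddSubmonoid.closure genSet ↔
      ∃ c k m : ℕ, k ≤ m ∧ (k = 0 → m = 0) ∧ f = tr c k m := by
  constructor
  · intro hf
    induction hf using AddSubmonoid.closure_induction with
    | mem x hx =>
      rcases hx with hx | ⟨n, hn, hx⟩
      · exact ⟨1, 0, 0, le_refl 0, fun _ => rfl, by rw [hx, X3_eq]⟩
      · exact ⟨0, 1, n, hn, by omega, by rw [hx, gen_eq]⟩
    | zero => exact ⟨0, 0, 0, le_refl 0, fun _ => rfl, tr_zero.symm⟩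
    | add x y hx hy ihx ihy =>
      obtain ⟨c, k, m, h1, h2, rfl⟩ := ihx
      obtain ⟨c', k', m', h1', h2', rfl⟩ := ihy
      exact ⟨c + c', k + k', m + m', by omega, by omega, tr_add _ _ _ _ _ _⟩
  · rintro ⟨c, k, m, h1, h2, rfl⟩
    exact mem_closure_genSet h1 h2

lemma atoms_eq : {a | IsAtomOf (AddSubmonoid.closure genSet) a} = genSet := by
  ext a
  simp only [Set.mem_setOf_eq]
  constructor
  · rintro ⟨hmem, hne, hsplit⟩
    obtain ⟨c, k, m, h1, h2, rfl⟩ := mem_closure_genSet_iff.mp hmem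
    have hne' : ¬(c = 0 ∧ k = 0 ∧ m = 0) := by
      rintro ⟨rfl, rfl, rfl⟩; exact hne tr_zero
    rcases Nat.eq_zero_or_pos c with hc | hc
    · subst hc
      have hk : 0 < k := by omega
      rcases Nat.lt_or_ge k 2 with hk2 | hk2
      · have hk1 : k = 1 := by omega
        subst hk1
        exact Or.inr ⟨m, by omega, (gen_eq m).symm⟩
      · exfalso
        have heq : tr 0 k m = tr 0 1 1 + tr 0 (k - 1) (m - 1) := by
          rw [tr_add]; congr 1 <;> omega
        rcases hsplit _ (mem_closure_genSet (le_refl 1) (by omega)) _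
            (mem_closure_genSet (by omega) (by omega)) heq with h | h
        · have := tr_injective (h.trans tr_zero.symm); omega
        · have := tr_injective (h.trans tr_zero.symm); omega
    · have heq : tr c k m = tr 1 0 0 + tr (c - 1) k m := by
        rw [tr_add]; congr 1 <;> omega
      rcases hsplit _ (mem_closure_genSet (le_refl 0) (fun _ => rfl)) _
          (mem_closure_genSet h1 h2) heq with h | h
      · have := tr_injective (h.trans tr_zero.symm); omega
      · have h3 := tr_injective (h.trans tr_zero.symm)
        have h4 : c = 1 ∧ k = 0 ∧ m = 0 := by omega
        left
        rw [h4.1, h4.2.1, h4.2.2, ← X3_eq]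
        rfl
  · intro ha
    have hamem : a ∈ AddSubmonoid.closure genSet := AddSubmonoid.subset_closure ha
    obtain ⟨c, k, m, hckm⟩ : ∃ c k m : ℕ, (¬(c = 0 ∧ k = 0 ∧ m = 0)) ∧
        (k + c = 1) ∧ a = tr c k m := by
      rcases ha with ha | ⟨n, hn, ha⟩
      · exact ⟨1, 0, 0, by omega, by omega, by rw [ha, X3_eq]⟩
      · exact ⟨0, 1, n, by omega, by omega, by rw [ha, gen_eq]⟩
    obtain ⟨hne0, hsum1, rfl⟩ := hckm
    refine ⟨hamem, ?_, ?_⟩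
    · intro h0
      have := tr_injective (h0.trans tr_zero.symm); omega
    · intro x hx y hy hxy
      obtain ⟨c1, k1, m1, a1, a2, rfl⟩ := mem_closure_genSet_iff.mp hx
      obtain ⟨c2, k2, m2, b1, b2, rfl⟩ := mem_closure_genSet_iff.mp hy
      rw [tr_add] at hxy
      have h3 := tr_injective hxy
      rcases Nat.eq_zero_or_pos (c1 + k1 + m1) with h | h
      · left
        have h4 : c1 = 0 ∧ k1 = 0 ∧ m1 = 0 := by omega
        rw [h4.1, h4.2.1, h4.2.2, tr_zero]
      · right
        have h4 : c2 = 0 ∧ k2 = 0 ∧ m2 = 0 := by omega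
        rw [h4.1, h4.2.1, h4.2.2, tr_zero]

lemma not_X3_le_gen (n : ℕ) :
    ¬ RatFuncLe (RatFunc.X ^ 3) (RatFunc.X + (n : RatFunc ℝ) * RatFunc.X ^ 2) := by
  rintro (h | h)
  · rw [X3_eq, gen_eq] at h
    have := tr_injective h; omega
  · unfold RatFuncPos at h
    rw [X3_eq, gen_eq, tr_eq_algebraMap, tr_eq_algebraMap, ← map_sub,
      RatFunc.num_algebraMap] at h
    set q : ℝ[X] := trP 0 1 n - trP 1 0 0 with hq
    have hq' : q = ((n : ℝ[X]) * Polynomial.X ^ 2 + Polynomial.X) + -(Polynomial.X ^ 3) := by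
      rw [hq]; simp only [trP]; push_cast; ring
    have hdeg : Polynomial.degree ((n : ℝ[X]) * Polynomial.X ^ 2 + Polynomial.X) <
        Polynomial.degree (-(Polynomial.X ^ 3) : ℝ[X]) := by
      rw [Polynomial.degree_neg, Polynomial.degree_X_pow]
      refine lt_of_le_of_lt (Polynomial.degree_add_le _ _) ?_
      rw [max_lt_iff]
      constructor
      · refine lt_of_le_of_lt (Polynomial.degree_mul_le _ _) ?_
        have h1 : Polynomial.degree ((n : ℝ[X])) ≤ 0 := Polynomial.degree_natCast_le n
        have h2 : Polynomial.degree ((Polynomial.X : ℝ[X]) ^ 2) = 2 :=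
          Polynomial.degree_X_pow 2
        calc Polynomial.degree ((n : ℝ[X])) + Polynomial.degree ((Polynomial.X : ℝ[X]) ^ 2)
            ≤ 0 + 2 := by rw [h2]; exact add_le_add h1 (le_refl 2)
          _ < 3 := by norm_num
      · rw [Polynomial.degree_X]
        norm_num
    have hlc : q.leadingCoeff = -1 := by
      rw [hq', Polynomial.leadingCoeff_add_of_degree_lt hdeg, Polynomial.leadingCoeff_neg,
        Polynomial.monic_X_pow 3]
    rw [hlc] at h
    norm_num at h

theorem rational_function_submonoid_not_increasing
    (P P' : AddSubmonoid (RatFunc ℝ))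
    (hP : AddSubmonoid.closure {f : RatFunc ℝ | ∃ n : ℕ, 0 < n ∧ f = RatFunc.X ^ n} = P)
    (hP' : AddSubmonoid.closure
        ({RatFunc.X ^ 3} ∪
          {f : RatFunc ℝ | ∃ n : ℕ, 0 < n ∧
            f = RatFunc.X + (n : RatFunc ℝ) * RatFunc.X ^ 2}) = P') :
    P' ≤ P ∧
      {a | IsAtomOf P' a} =
        {RatFunc.X ^ 3} ∪
          {f : RatFunc ℝ | ∃ n : ℕ, 0 < n ∧
            f = RatFunc.X + (n : RatFunc ℝ) * RatFunc.X ^ 2} ∧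
      ¬∃ u : ℕ → RatFunc ℝ, (∀ m n : ℕ, m ≤ n → RatFuncLe (u m) (u n)) ∧
        AddSubmonoid.closure (Set.range u) = P' := by
  have hgs : genSet = ({RatFunc.X ^ 3} ∪
      {f : RatFunc ℝ | ∃ n : ℕ, 0 < n ∧
        f = RatFunc.X + (n : RatFunc ℝ) * RatFunc.X ^ 2} : Set (RatFunc ℝ)) := rfl
  subst hP hP'
  rw [← hgs]
  refine ⟨?_, atoms_eq, ?_⟩
  · rw [AddSubmonoid.closure_le]
    rintro f (hf | ⟨n, hn, rfl⟩)
    · exact AddSubmonoid.subset_closure ⟨3, by norm_num, hf⟩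
    · have hX : RatFunc.X ∈ AddSubmonoid.closure
          {f : RatFunc ℝ | ∃ n : ℕ, 0 < n ∧ f = RatFunc.X ^ n} :=
        AddSubmonoid.subset_closure ⟨1, one_pos, (pow_one _).symm⟩
      have hX2 : (RatFunc.X : RatFunc ℝ) ^ 2 ∈ AddSubmonoid.closure
          {f : RatFunc ℝ | ∃ n : ℕ, 0 < n ∧ f = RatFunc.X ^ n} :=
        AddSubmonoid.subset_closure ⟨2, by norm_num, rfl⟩
      have hns : (n : RatFunc ℝ) * RatFunc.X ^ 2 = n • (RatFunc.X ^ 2 : RatFunc ℝ) := by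
        rw [nsmul_eq_mul]
      rw [hns]
      exact AddSubmonoid.add_mem _ hX (nsmul_mem hX2 n)
  · rintro ⟨u, hu, hclos⟩
    have hrange : ∀ a, IsAtomOf (AddSubmonoid.closure genSet) a → a ∈ Set.range u := by
      intro a ha
      have hmem : a ∈ AddSubmonoid.closure (Set.range u) := by rw [hclos]; exact ha.1
      have key : ∀ x, x ∈ AddSubmonoid.closure (Set.range u) →
          IsAtomOf (AddSubmonoid.closure genSet) x → x ∈ Set.range u := by
        intro x hx
        induction hx using AddSubmonoid.closure_induction with
        | mem y hy => exact fun _ => hy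
        | zero => exact fun h => absurd rfl h.2.1
        | add x y hx hy ihx ihy =>
          intro hat
          have hx' : x ∈ AddSubmonoid.closure genSet := by rw [← hclos]; exact hx
          have hy' : y ∈ AddSubmonoid.closure genSet := by rw [← hclos]; exact hy
          rcases hat.2.2 x hx' y hy' rfl with h0 | h0
          · rw [h0, zero_add] at hat ⊢
            exact ihy hat
          · rw [h0, add_zero] at hat ⊢
            exact ihx hat
      exact key a hmem ha
    have hatom : ∀ a ∈ genSet, IsAtomOf (AddSubmonoid.closure genSet) a := by
      intro a ha
      have h5 := atoms_eq
      rw [Set.ext_iff] at h5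
      exact (h5 a).mpr ha
    obtain ⟨j, hj⟩ := hrange _ (hatom (RatFunc.X ^ 3) (Or.inl rfl))
    have hidx : ∀ n : ℕ, ∃ i, i < j ∧
        u i = RatFunc.X + ((n + 1 : ℕ) : RatFunc ℝ) * RatFunc.X ^ 2 := by
      intro n
      obtain ⟨i, hi⟩ := hrange _ (hatom _ (Or.inr ⟨n + 1, Nat.succ_pos n, rfl⟩))
      refine ⟨i, ?_, hi⟩
      by_contra hij
      push_neg at hij
      have h6 := hu j i hij
      rw [hj, hi] at h6
      exact not_X3_le_gen (n + 1) h6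
    choose idx hidx_lt hidx_eq using hidx
    have hinj : Function.Injective idx := by
      intro n₁ n₂ h
      have h7 : u (idx n₁) = u (idx n₂) := by rw [h]
      rw [hidx_eq, hidx_eq, gen_eq, gen_eq] at h7
      have := tr_injective h7
      omega
    have hfin : (Set.Iio j).Finite := Set.finite_Iio j
    exact Set.infinite_of_injective_forall_mem hinj
      (fun n => Set.mem_Iio.mpr (hidx_lt n)) hfin
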